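/- (If every loop has negative partial return, non-terminating trajectories have return diverging to negative infinity.) In a finite deterministic MDP with transition function T : S → A → S and reward r : S × A → ℝ, suppose that every loop—every T-consistent segment of length n ≥ 1 whose final state equals its initial state—has strictly negative partial return. Then for every infinite T-consistent trajectory, given by s : ℕ → S and a : ℕ → A with s(t+1) = T (s(t)) (a(t)) for all t, the sequence of partial sums N ↦ ∑_{t<N} r(s(t), a(t)) tends to −∞ as N → ∞. -/

import Mathlib

/-- Trajectory of a deterministic MDP from state `s0` following actions `as`. -/
def trajMDP {S A : Type*} (T : S → A → S) (s0 : S) (as : ℕ → A) : ℕ → S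
  | 0 => s0
  | n+1 => T (trajMDP T s0 as n) (as n)

/-- If every loop has negative partial return, non-terminating trajectories have return diverging
to negative infinity. In a finite deterministic MDP, if every `T`-consistent segment of length
`n ≥ 1` whose final state equals its initial state has strictly negative partial return, then for
every infinite `T`-consistent trajectory the partial sums of rewards tend to `−∞`. -/
theorem neg_loops_return_tendsto_atBot
    {S A : Type*} [Fintype S] [Fintype A] [Nonempty S] [Nonempty A]
    (T : S → A → S) (r : S × A → ℝ)
    (hloops : ∀ (n : ℕ), 1 ≤ n → ∀ (s : Fin (n + 1) → S) (a : Fin n → A),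
      (∀ i : Fin n, s i.succ = T (s i.castSucc) (a i)) →
      s (Fin.last n) = s 0 →
      (∑ i : Fin n, r (s i.castSucc, a i)) < 0) :
    ∀ (s : ℕ → S) (a : ℕ → A), (∀ t, s (t + 1) = T (s t) (a t)) →
      Filter.Tendsto (fun N => ∑ t ∈ Finset.range N, r (s t, a t))
        Filter.atTop Filter.atBot := by
  classical
  set K := Fintype.card S with hKdef
  have hK : 0 < K := Fintype.card_pos
  -- a uniform bound on rewards
  obtain ⟨x0⟩ := (inferInstance : Nonempty (S × A))
  set M : ℝ := Finset.univ.sup' ⟨x0, Finset.mem_univ x0⟩ (fun x => |r x|) with hMdef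
  have hM : ∀ x : S × A, r x ≤ M := fun x => by
    rw [hMdef]
    exact (le_abs_self _).trans (Finset.le_sup' (fun y : S × A => |r y|) (Finset.mem_univ x))
  have hM0 : 0 ≤ M := by
    rw [hMdef]
    exact (abs_nonneg (r x0)).trans (Finset.le_sup' (fun y : S × A => |r y|) (Finset.mem_univ x0))
  -- all trajectory loops are negative
  have hneg : ∀ (s0 : S) (as : ℕ → A) (n : ℕ), 1 ≤ n → trajMDP T s0 as n = s0 →
      ∑ t ∈ Finset.range n, r (trajMDP T s0 as t, as t) < 0 := by
    intro s0 as n hn hl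
    have h := hloops n hn (fun i => trajMDP T s0 as i) (fun i => as i)
      (fun i => by simp [Fin.val_succ, trajMDP]) (by simpa [trajMDP] using hl)
    calc ∑ t ∈ Finset.range n, r (trajMDP T s0 as t, as t)
        = ∑ i : Fin n, r (trajMDP T s0 as i, as i) :=
          (Fin.sum_univ_eq_sum_range (fun t => r (trajMDP T s0 as t, as t)) n).symm
      _ < 0 := by simpa using h
  -- uniform δ > 0 below which all loops of length ≤ K fall
  haveI : Nonempty (Fin K) := ⟨⟨0, hK⟩⟩
  set pad : (Fin K → A) → ℕ → A := fun as t => as ⟨t % K, Nat.mod_lt _ hK⟩ with hpad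
  set g : S × (Fin K → A) × Fin K → ℝ := fun x =>
    if trajMDP T x.1 (pad x.2.1) (x.2.2 + 1) = x.1
    then ∑ t ∈ Finset.range (x.2.2 + 1), r (trajMDP T x.1 (pad x.2.1) t, pad x.2.1 t)
    else -1 with hg
  have hgneg : ∀ x, g x < 0 := by
    intro x
    rw [hg]
    dsimp only
    split
    · exact hneg _ _ _ (Nat.succ_le_succ (Nat.zero_le _)) ‹_›
    · norm_num
  obtain ⟨y0⟩ := (inferInstance : Nonempty (S × (Fin K → A) × Fin K))
  set δ : ℝ := -(Finset.univ.sup' ⟨y0, Finset.mem_univ y0⟩ g) with hδdef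
  have hδpos : 0 < δ := by
    have : Finset.univ.sup' ⟨y0, Finset.mem_univ y0⟩ g < 0 :=
      (Finset.sup'_lt_iff _).2 fun x _ => hgneg x
    rw [hδdef]; linarith
  have hδ : ∀ (s : ℕ → S) (a : ℕ → A), (∀ t, s (t + 1) = T (s t) (a t)) →
      ∀ n, 1 ≤ n → n ≤ K → s n = s 0 →
      ∑ t ∈ Finset.range n, r (s t, a t) ≤ -δ := by
    intro s a hsa n h1 hnK hloop
    have hm : n - 1 < K := by omega
    set x : S × (Fin K → A) × Fin K := (s 0, fun i : Fin K => a i, ⟨n - 1, hm⟩) with hx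
    have hpadx : ∀ t, t < K → pad x.2.1 t = a t := by
      intro t ht
      show x.2.1 ⟨t % K, _⟩ = a t
      rw [hx]
      dsimp only
      congr 1
      exact Nat.mod_eq_of_lt ht
    have htr : ∀ t, t ≤ n → trajMDP T (s 0) (pad x.2.1) t = s t := by
      intro t ht
      induction t with
      | zero => rfl
      | succ t ih =>
        have h2 : t < n := ht
        show T (trajMDP T (s 0) (pad x.2.1) t) (pad x.2.1 t) = s (t + 1)
        rw [ih h2.le, hpadx t (lt_of_lt_of_le h2 hnK), hsa t]
    have hn1 : n - 1 + 1 = n := by omega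
    have hcond : trajMDP T x.1 (pad x.2.1) (↑x.2.2 + 1) = x.1 := by
      show trajMDP T (s 0) (pad x.2.1) (n - 1 + 1) = s 0
      rw [hn1, htr n le_rfl, hloop]
    have hgx : g x = ∑ t ∈ Finset.range n, r (s t, a t) := by
      rw [hg]
      dsimp only
      rw [if_pos hcond]
      show ∑ t ∈ Finset.range (n - 1 + 1), _ = _
      rw [hn1]
      refine Finset.sum_congr rfl fun t ht => ?_
      have ht' : t < n := Finset.mem_range.1 ht
      rw [htr t ht'.le, hpadx t (lt_of_lt_of_le ht' hnK)]
    have := Finset.le_sup' g (Finset.mem_univ x)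
    rw [hgx] at this
    rw [hδdef]
    linarith
  -- main quantitative bound, by strong induction over all trajectories
  have key : ∀ N (s : ℕ → S) (a : ℕ → A), (∀ t, s (t + 1) = T (s t) (a t)) →
      ∑ t ∈ Finset.range N, r (s t, a t) ≤ K * M - δ * (N / K : ℕ) := by
    intro N
    induction N using Nat.strong_induction_on with
    | _ N IH =>
      intro s a hsa
      by_cases hNK : N < K
      · have h1 : ∑ t ∈ Finset.range N, r (s t, a t) ≤ N * M := by
          calc ∑ t ∈ Finset.range N, r (s t, a t) ≤ ∑ t ∈ Finset.range N, M :=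
                Finset.sum_le_sum fun t _ => hM _
            _ = N * M := by simp [Finset.sum_const, Finset.card_range, nsmul_eq_mul]
        have h2 : (N : ℝ) * M ≤ K * M :=
          mul_le_mul_of_nonneg_right (Nat.cast_le.2 hNK.le) hM0
        have h3 : N / K = 0 := Nat.div_eq_of_lt hNK
        rw [h3]
        push_cast
        linarith
      · push_neg at hNK
        -- pigeonhole on the first K+1 states
        obtain ⟨i, j, hij, heq⟩ :=
          Fintype.exists_ne_map_eq_of_card_lt (fun i : Fin (K + 1) => s i)
            (by simp [hKdef])
        -- wlog i < j
        obtain ⟨p, q, hpq, hqK, hpqeq⟩ : ∃ p q : ℕ, p < q ∧ q ≤ K ∧ s p = s q := by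
          rcases lt_or_gt_of_ne (fun h : (i : ℕ) = (j : ℕ) => hij (Fin.ext h)) with h | h
          · exact ⟨i, j, h, Nat.lt_succ_iff.1 j.isLt, heq⟩
          · exact ⟨j, i, h, Nat.lt_succ_iff.1 i.isLt, heq.symm⟩
        obtain ⟨d, hpd⟩ : ∃ d, p + d = q := ⟨q - p, by omega⟩
        have hd1 : 1 ≤ d := by omega
        have hdK : d ≤ K := by omega
        have hdN : d ≤ N := hdK.trans hNK
        -- the loop from p to q has sum ≤ -δ
        have hloopsum : ∑ t ∈ Finset.Ico p q, r (s t, a t) ≤ -δ := by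
          have := hδ (fun t => s (p + t)) (fun t => a (p + t))
            (fun t => by show s (p + (t + 1)) = T (s (p + t)) (a (p + t));
                         rw [← Nat.add_assoc]; exact hsa (p + t)) d hd1 hdK
            (by show s (p + d) = s (p + 0); rw [hpd, Nat.add_zero]; exact hpqeq.symm)
          have hqp : q - p = d := by omega
          calc ∑ t ∈ Finset.Ico p q, r (s t, a t)
              = ∑ t ∈ Finset.range (q - p), r (s (p + t), a (p + t)) :=
                Finset.sum_Ico_eq_sum_range (fun t => r (s t, a t)) p q
            _ ≤ -δ := by rw [hqp]; simpa using this
        -- spliced trajectory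
        set s' : ℕ → S := fun t => if t < p then s t else s (t + d) with hs'
        set a' : ℕ → A := fun t => if t < p then a t else a (t + d) with ha'
        have hsa' : ∀ t, s' (t + 1) = T (s' t) (a' t) := by
          intro t
          by_cases h : t < p
          · rw [hs', ha']
            dsimp only
            simp only [if_pos h]
            by_cases h1 : t + 1 < p
            · simp only [if_pos h1]; exact hsa t
            · have ht1 : t + 1 = p := by omega
              simp only [if_neg h1]
              have h2 : t + 1 + d = q := by omega
              rw [h2, ← hpqeq, ← ht1]
              exact hsa t
          · rw [hs', ha']
            dsimp only
            simp only [if_neg h, if_neg (by omega : ¬ t + 1 < p)]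
            have h2 : t + 1 + d = (t + d) + 1 := by omega
            rw [h2]
            exact hsa (t + d)
        have hIH := IH (N - d) (by omega) s' a' hsa'
        -- sum identity
        have hsplit : ∑ t ∈ Finset.range N, r (s t, a t)
            = ∑ t ∈ Finset.range (N - d), r (s' t, a' t)
              + ∑ t ∈ Finset.Ico p q, r (s t, a t) := by
          have hpdN : p + d ≤ N := by omega
          have hpN : p ≤ N - d := by omega
          have e1 : ∑ t ∈ Finset.range (N - d), r (s' t, a' t)
              = ∑ t ∈ Finset.range p, r (s t, a t)
                + ∑ t ∈ Finset.Ico q N, r (s t, a t) := by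
            rw [Finset.range_eq_Ico, ← Finset.sum_Ico_consecutive _ (Nat.zero_le p) hpN,
              ← Finset.range_eq_Ico]
            congr 1
            · refine Finset.sum_congr rfl fun t ht => ?_
              have := Finset.mem_range.1 ht
              rw [hs', ha']; dsimp only; simp only [if_pos this]
            · have e2 : ∑ t ∈ Finset.Ico p (N - d), r (s' t, a' t)
                  = ∑ t ∈ Finset.Ico p (N - d), r (s (t + d), a (t + d)) := by
                refine Finset.sum_congr rfl fun t ht => ?_
                have := (Finset.mem_Ico.1 ht).1
                rw [hs', ha']; dsimp only
                simp only [if_neg (by omega : ¬ t < p)]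
              rw [e2, Finset.sum_Ico_add' (fun t => r (s t, a t)) p (N - d) d, hpd,
                Nat.sub_add_cancel hdN]
          have e3 : ∑ t ∈ Finset.range N, r (s t, a t)
              = ∑ t ∈ Finset.range p, r (s t, a t)
                + ∑ t ∈ Finset.Ico p q, r (s t, a t)
                + ∑ t ∈ Finset.Ico q N, r (s t, a t) := by
            rw [Finset.range_eq_Ico, ← Finset.sum_Ico_consecutive (f := fun t => r (s t, a t))
              (Nat.zero_le q) (by omega : q ≤ N),
              ← Finset.sum_Ico_consecutive (f := fun t => r (s t, a t))
              (Nat.zero_le p) (by omega : p ≤ q), ← Finset.range_eq_Ico]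
          rw [e3, e1]
          ring
        -- nat division comparison
        have hdiv : (N / K : ℕ) ≤ (N - d) / K + 1 := by
          have h1 : N ≤ (N - d) + K := by omega
          calc N / K ≤ ((N - d) + K) / K := Nat.div_le_div_right h1
            _ = (N - d) / K + 1 := Nat.add_div_right _ hK
        have hdivR : (↑(N / K) : ℝ) ≤ ↑((N - d) / K) + 1 := by
          exact_mod_cast hdiv
        calc ∑ t ∈ Finset.range N, r (s t, a t)
            = ∑ t ∈ Finset.range (N - d), r (s' t, a' t)
              + ∑ t ∈ Finset.Ico p q, r (s t, a t) := hsplit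
          _ ≤ (K * M - δ * ((N - d) / K : ℕ)) + (-δ) := add_le_add hIH hloopsum
          _ ≤ K * M - δ * (N / K : ℕ) := by nlinarith [hδpos, hdivR]
  -- conclude
  intro s a hsa
  have hb : Filter.Tendsto (fun N : ℕ => (K : ℝ) * M - δ * (N / K : ℕ))
      Filter.atTop Filter.atBot := by
    have h1 : Filter.Tendsto (fun N : ℕ => N / K) Filter.atTop Filter.atTop :=
      Filter.tendsto_atTop_atTop.2 fun b => ⟨b * K, fun n hn =>
        (Nat.le_div_iff_mul_le hK).2 hn⟩
    have h2 : Filter.Tendsto (fun N : ℕ => ((N / K : ℕ) : ℝ)) Filter.atTop Filter.atTop :=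
      tendsto_natCast_atTop_atTop.comp h1
    have h3 : Filter.Tendsto (fun N : ℕ => δ * ((N / K : ℕ) : ℝ)) Filter.atTop Filter.atTop :=
      h2.const_mul_atTop hδpos
    have h4 : Filter.Tendsto (fun N : ℕ => -(δ * ((N / K : ℕ) : ℝ)))
        Filter.atTop Filter.atBot := Filter.tendsto_neg_atTop_atBot.comp h3
    have h5 := Filter.tendsto_atBot_add_const_left Filter.atTop ((K : ℝ) * M) h4
    simpa [sub_eq_add_neg] using h5
  exact Filter.tendsto_atBot_mono (fun N => key N s a hsa) hb
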